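/- (Backward Euler maximal regularity) Let A be a symmetric positive semidefinite n×n matrix, and suppose U_0, ..., U_m ∈ ℝ^n satisfy (U_{n+1} - U_n)/k_n + A U_{n+1} = g_n for time steps k_n > 0. Then ⟨U_m, A U_m⟩ + ∑_{n=0}^{m-1} k_n ‖(U_{n+1}-U_n)/k_n‖² + ∑_{n=0}^{m-1} k_n ‖A U_{n+1}‖² ≤ ⟨U_0, A U_0⟩ + ∑_{n=0}^{m-1} k_n ‖g_n‖². -/

import Mathlib

open Matrix

lemma sumSq_eq_dot {n : ℕ} (x : Fin n → ℝ) : ∑ i, x i ^ 2 = x ⬝ᵥ x := by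
  simp [dotProduct, sq]

lemma symm_dot {n : ℕ} (A : Matrix (Fin n) (Fin n) ℝ) (hA : A.PosSemidef)
    (a b : Fin n → ℝ) : a ⬝ᵥ A.mulVec b = b ⬝ᵥ A.mulVec a := by
  have hAs : Aᵀ = A := by
    have := hA.1
    rwa [Matrix.IsHermitian, Matrix.conjTranspose_eq_transpose_of_trivial] at this
  calc a ⬝ᵥ A.mulVec b = A.vecMul a ⬝ᵥ b := Matrix.dotProduct_mulVec a A b
    _ = Aᵀ.mulVec a ⬝ᵥ b := by rw [← Matrix.mulVec_transpose]
    _ = A.mulVec a ⬝ᵥ b := by rw [hAs]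
    _ = b ⬝ᵥ A.mulVec a := dotProduct_comm _ _

lemma step_est {n : ℕ} (A : Matrix (Fin n) (Fin n) ℝ) (hA : A.PosSemidef)
    (k : ℝ) (hk : 0 < k) (a b gg : Fin n → ℝ)
    (heq : k⁻¹ • (a - b) + A.mulVec a = gg) :
    a ⬝ᵥ A.mulVec a + k * ∑ i, (k⁻¹ • (a - b)) i ^ 2 + k * ∑ i, (A.mulVec a i) ^ 2
      ≤ b ⬝ᵥ A.mulVec b + k * ∑ i, (gg i) ^ 2 := by
  set w := k⁻¹ • (a - b) with hw
  set v := A.mulVec a with hv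
  rw [sumSq_eq_dot, sumSq_eq_dot, sumSq_eq_dot, ← heq]
  have hexp : (w + v) ⬝ᵥ (w + v) = w ⬝ᵥ w + 2 * (w ⬝ᵥ v) + v ⬝ᵥ v := by
    simp [add_dotProduct, dotProduct_add, dotProduct_comm v w]
    ring
  have hkw : k * (w ⬝ᵥ v) = (a - b) ⬝ᵥ v := by
    rw [hw, smul_dotProduct, smul_eq_mul, ← mul_assoc, mul_inv_cancel₀ hk.ne',
      one_mul]
  -- key inequality: 2 (a-b) ⬝ A a ≥ a ⬝ A a - b ⬝ A b
  have hkey : a ⬝ᵥ A.mulVec a - b ⬝ᵥ A.mulVec b ≤ 2 * ((a - b) ⬝ᵥ v) := by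
    have hpos : 0 ≤ (a - b) ⬝ᵥ A.mulVec (a - b) := by
      have := hA.dotProduct_mulVec_nonneg (a - b); rwa [star_trivial] at this
    have hsym : b ⬝ᵥ A.mulVec a = a ⬝ᵥ A.mulVec b := symm_dot A hA b a
    have hexp2 : (a - b) ⬝ᵥ A.mulVec (a - b)
        = a ⬝ᵥ A.mulVec a - 2 * (b ⬝ᵥ A.mulVec a) + b ⬝ᵥ A.mulVec b := by
      rw [Matrix.mulVec_sub, sub_dotProduct, dotProduct_sub,
        dotProduct_sub, hsym]
      ring
    have h2 : 2 * ((a - b) ⬝ᵥ v) = 2 * (a ⬝ᵥ A.mulVec a) - 2 * (b ⬝ᵥ A.mulVec a) := by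
      rw [hv, sub_dotProduct]; ring
    nlinarith [hpos, hexp2]
  have : k * ((w + v) ⬝ᵥ (w + v)) = k * (w ⬝ᵥ w) + 2 * ((a - b) ⬝ᵥ v) + k * (v ⬝ᵥ v) := by
    linear_combination k * hexp + 2 * hkw
  nlinarith [hkey, this]

/-- Backward (implicit) Euler maximal regularity estimate in `ℝ^n` with variable time steps
and a symmetric positive semidefinite matrix `A`. -/
theorem backwardEuler_maximal_regularity (n m : ℕ)
    (A : Matrix (Fin n) (Fin n) ℝ) (hA : A.PosSemidef)
    (k : ℕ → ℝ) (hk : ∀ j < m, 0 < k j) (U g : ℕ → (Fin n → ℝ))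
    (heq : ∀ j < m, (k j)⁻¹ • (U (j + 1) - U j) + A.mulVec (U (j + 1)) = g j) :
    U m ⬝ᵥ A.mulVec (U m)
        + ∑ j ∈ Finset.range m, k j * ∑ i, ((k j)⁻¹ • (U (j + 1) - U j)) i ^ 2
        + ∑ j ∈ Finset.range m, k j * ∑ i, (A.mulVec (U (j + 1)) i) ^ 2
      ≤ U 0 ⬝ᵥ A.mulVec (U 0)
        + ∑ j ∈ Finset.range m, k j * ∑ i, (g j i) ^ 2 := by
  induction m with
  | zero => simp
  | succ m ih =>
    have hk' : ∀ j < m, 0 < k j := fun j hj => hk j (hj.trans (Nat.lt_succ_self m))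
    have heq' : ∀ j < m, (k j)⁻¹ • (U (j + 1) - U j) + A.mulVec (U (j + 1)) = g j :=
      fun j hj => heq j (hj.trans (Nat.lt_succ_self m))
    have IH := ih hk' heq'
    have hstep := step_est A hA (k m) (hk m (Nat.lt_succ_self m)) (U (m + 1)) (U m) (g m)
      (heq m (Nat.lt_succ_self m))
    simp only [Finset.sum_range_succ]
    linarith
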